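/- Let k be a symmetric positive-semidefinite kernel on a type ι and σ > 0 a noise level. For any n, any observation points x : Fin n → ι, and any two points z₁, z₂ : ι, the Gaussian-process posterior covariance satisfies the Cauchy–Schwarz bound k(z₁, z₂; x)² ≤ σ²(z₁; x) · σ²(z₂; x). -/

import Mathlib

open Matrix



/-- The Gaussian-process posterior covariance `k(z, z'; x)` given observation
points `x : Fin n → ι` and noise level `σ`. -/
noncomputable def postCov {ι : Type*} (k : ι → ι → ℝ) (σ : ℝ) {n : ℕ}
    (x : Fin n → ι) (z z' : ι) : ℝ :=
  k z z' -
    dotProduct (fun i => k (x i) z)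
      (Matrix.mulVec
        ((Matrix.of (fun i j => k (x i) (x j)) + σ ^ 2 • (1 : Matrix (Fin n) (Fin n) ℝ))⁻¹)
        (fun i => k (x i) z'))

/-- The Gaussian-process posterior variance `σ²(z; x) = k(z, z; x)`. -/
noncomputable def postVar {ι : Type*} (k : ι → ι → ℝ) (σ : ℝ) {n : ℕ}
    (x : Fin n → ι) (z : ι) : ℝ :=
  postCov k σ x z z


/-- Cauchy–Schwarz for a real positive semidefinite 2×2 matrix. -/
lemma psd_two_cauchy_schwarz (S : Matrix (Fin 2) (Fin 2) ℝ) (hS : S.PosSemidef) :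
    (S 0 1) ^ 2 ≤ S 0 0 * S 1 1 := by
  have hsym : S 1 0 = S 0 1 := by
    have h := congrFun (congrFun hS.isHermitian.eq 1) 0
    simpa [Matrix.conjTranspose_apply] using h.symm
  have key : ∀ t : ℝ, 0 ≤ S 0 0 * (t * t) + (2 * S 0 1) * t + S 1 1 := by
    intro t
    have h := (Matrix.posSemidef_iff_dotProduct_mulVec.mp hS).2 ![t, 1]
    simp [dotProduct, Matrix.mulVec, Fin.sum_univ_two] at h
    rw [hsym] at h
    nlinarith [h]
  have hd := discrim_le_zero key
  rw [discrim] at hd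
  nlinarith [hd]

theorem posterior_covariance_cauchy_schwarz
    {ι : Type*} (k : ι → ι → ℝ) (σ : ℝ)
    (hσ : 0 < σ)
    (hsymm : ∀ z z', k z z' = k z' z)
    (hpsd : ∀ (n : ℕ) (x : Fin n → ι),
      (Matrix.of (fun i j => k (x i) (x j)) : Matrix (Fin n) (Fin n) ℝ).PosSemidef)
    (n : ℕ) (x : Fin n → ι) (z₁ z₂ : ι) :
    (postCov k σ x z₁ z₂) ^ 2 ≤ postVar k σ x z₁ * postVar k σ x z₂ := by
  classical
  set K : Matrix (Fin n) (Fin n) ℝ := Matrix.of (fun i j => k (x i) (x j)) with hKdef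
  set M : Matrix (Fin n) (Fin n) ℝ := K + σ ^ 2 • (1 : Matrix (Fin n) (Fin n) ℝ) with hMdef
  set zv : Fin 2 → ι := ![z₁, z₂] with hzv
  set A : Matrix (Fin n) (Fin 2) ℝ := Matrix.of (fun i j => k (x i) (zv j)) with hA
  set D : Matrix (Fin 2) (Fin 2) ℝ := Matrix.of (fun i j => k (zv i) (zv j)) with hD
  -- M is positive definite
  have hσ1 : ((σ ^ 2) • (1 : Matrix (Fin n) (Fin n) ℝ)).PosDef := by
    rw [Matrix.smul_one_eq_diagonal]
    exact Matrix.posDef_diagonal_iff.mpr fun i => by positivity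
  have hM : M.PosDef := Matrix.PosDef.posSemidef_add (hpsd n x) hσ1
  haveI : Invertible M := hM.isUnit.invertible
  -- the extended kernel matrix is PSD
  have hKext : (Matrix.fromBlocks K A Aᴴ D).PosSemidef := by
    have hbig := (hpsd (n + 2) (Sum.elim x zv ∘ finSumFinEquiv.symm)).submatrix
      (finSumFinEquiv : Fin n ⊕ Fin 2 ≃ Fin (n + 2))
    have heq : (Matrix.of (fun i j =>
        k ((Sum.elim x zv ∘ finSumFinEquiv.symm) i) ((Sum.elim x zv ∘ finSumFinEquiv.symm) j))
          : Matrix (Fin (n + 2)) (Fin (n + 2)) ℝ).submatrix finSumFinEquiv finSumFinEquiv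
        = Matrix.fromBlocks K A Aᴴ D := by
      ext p q
      rcases p with p | p <;> rcases q with q | q <;>
        simp [Matrix.submatrix_apply, hKdef, hA, hD, Matrix.conjTranspose_apply] <;>
          exact hsymm _ _
    rwa [heq] at hbig
  -- the block matrix with noise added on the K-block is PSD
  have hblock : (Matrix.fromBlocks M A Aᴴ D).PosSemidef := by
    have h0 : (Matrix.fromBlocks ((σ ^ 2) • (1 : Matrix (Fin n) (Fin n) ℝ)) 0 0
        (0 : Matrix (Fin 2) (Fin 2) ℝ)).PosSemidef := by
      rw [Matrix.smul_one_eq_diagonal, show (0 : Matrix (Fin 2) (Fin 2) ℝ)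
        = Matrix.diagonal (fun _ => (0:ℝ)) by simp, Matrix.fromBlocks_diagonal]
      exact Matrix.posSemidef_diagonal_iff.mpr fun i => by
        rcases i with i | i <;> simp <;> positivity
    have : Matrix.fromBlocks M A Aᴴ D
        = Matrix.fromBlocks K A Aᴴ D + Matrix.fromBlocks ((σ ^ 2) • 1) 0 0 0 := by
      rw [Matrix.fromBlocks_add]; simp [hMdef]
    rw [this]
    exact hKext.add h0
  -- Schur complement is PSD
  have hS : (D - Aᴴ * M⁻¹ * A).PosSemidef :=
    (Matrix.PosDef.fromBlocks₁₁ A D hM).mp hblock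
  have hcs := psd_two_cauchy_schwarz _ hS
  -- identify entries
  have entry : ∀ a b : Fin 2, (D - Aᴴ * M⁻¹ * A) a b
      = k (zv a) (zv b) - dotProduct (fun i => k (x i) (zv a)) (M⁻¹ *ᵥ fun i => k (x i) (zv b)) := by
    intro a b
    have : (Aᴴ * M⁻¹ * A) a b
        = dotProduct (fun i => k (x i) (zv a)) (M⁻¹ *ᵥ fun i => k (x i) (zv b)) := by
      simp only [Matrix.mul_apply, Matrix.conjTranspose_apply, dotProduct,
        Matrix.mulVec, hA, Matrix.of_apply, star_trivial]
      simp_rw [Finset.sum_mul, Finset.mul_sum]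
      rw [Finset.sum_comm]
      exact Finset.sum_congr rfl fun j _ => Finset.sum_congr rfl fun i _ => by ring
    rw [Matrix.sub_apply, this, hD]
    simp
  have e01 := entry 0 1
  have e00 := entry 0 0
  have e11 := entry 1 1
  have hz0 : zv 0 = z₁ := rfl
  have hz1 : zv 1 = z₂ := rfl
  rw [e01, e00, e11, hz0, hz1] at hcs
  simpa [postCov, postVar, hMdef, hKdef] using hcs
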